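/- arXiv:math/0505271 — 2 statements merged into one kernel-verified Lean document; each statement's English description precedes it below -/
import Mathlib

section
/- Let c₀ ≥ 82 with c₀ = (2kπ + π/2)⁴ for some k ∈ ℕ, and suppose 2/√c₀ < 1/4. Define p(t) = 1/√(t+c₀) and q(t) = 1/√(t+c₀) + (1/(4(t+c₀)^{3/4})) sin((t+c₀)^{1/4}). For a, b ∈ (-1,1) define H_{a,b}(T) = ∫₀ᵀ (p(t+a) - q(t+b)) dt. Then limsup_{T→∞} H_{a,b}(T) > 1/4 and liminf_{T→∞} H_{a,b}(T) < -1/4, and limsup_{T→∞} H_{a,b}(T) - liminf_{T→∞} H_{a,b}(T) ≥ 1. -/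
open Real Filter intervalIntegral


lemma sqrt_gap' {u v : ℝ} (hu : 81 ≤ u) (huv : u ≤ v) (h2 : v ≤ u + 2) :
    0 ≤ Real.sqrt v - Real.sqrt u ∧ Real.sqrt v - Real.sqrt u ≤ 1/9 := by
  have hu0 : (0:ℝ) ≤ u := by linarith
  have hv0 : (0:ℝ) ≤ v := by linarith
  have h9 : (9:ℝ) ≤ Real.sqrt u := by
    rw [show (9:ℝ) = Real.sqrt 81 by
      rw [show (81:ℝ) = 9^2 by norm_num, Real.sqrt_sq (by norm_num : (0:ℝ) ≤ 9)]]
    exact Real.sqrt_le_sqrt hu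
  have hmono : Real.sqrt u ≤ Real.sqrt v := Real.sqrt_le_sqrt huv
  have hsu : Real.sqrt u ^ 2 = u := Real.sq_sqrt hu0
  have hsv : Real.sqrt v ^ 2 = v := Real.sq_sqrt hv0
  refine ⟨by linarith, ?_⟩
  nlinarith

lemma pow4_rpow_quarter {x : ℝ} (hx : 0 ≤ x) : (x ^ 4) ^ ((1:ℝ)/4) = x := by
  rw [← Real.rpow_natCast x 4, ← Real.rpow_mul hx]
  norm_num

lemma rpow_quarter_pow4 {x : ℝ} (hx : 0 ≤ x) : (x ^ ((1:ℝ)/4)) ^ 4 = x := by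
  rw [← Real.rpow_natCast (x ^ ((1:ℝ)/4)) 4, ← Real.rpow_mul hx]
  norm_num

lemma self_le_pow4 {x : ℝ} (hx : 1 ≤ x) : x ≤ x ^ 4 := by nlinarith [sq_nonneg x, sq_nonneg (x-1), sq_nonneg (x+1)]

lemma keyDeriv (A B t : ℝ) (hA : 0 < t + A) (hB : 0 < t + B) :
    HasDerivAt (fun s : ℝ => 2 * Real.sqrt (s + A) - 2 * Real.sqrt (s + B)
      + Real.cos ((s + B) ^ ((1:ℝ)/4)))
      (1 / Real.sqrt (t + A) - (1 / Real.sqrt (t + B)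
        + (1 / (4 * (t + B) ^ ((3:ℝ)/4))) * Real.sin ((t + B) ^ ((1:ℝ)/4)))) t := by
  have hAne : t + A ≠ 0 := ne_of_gt hA
  have hBne : t + B ≠ 0 := ne_of_gt hB
  have h1 : HasDerivAt (fun s : ℝ => Real.sqrt (s + A)) (1 / (2 * Real.sqrt (t + A))) t := by
    have := (Real.hasDerivAt_sqrt hAne).comp t ((hasDerivAt_id t).add_const A)
    simpa [Function.comp_def] using this
  have h2 : HasDerivAt (fun s : ℝ => Real.sqrt (s + B)) (1 / (2 * Real.sqrt (t + B))) t := by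
    have := (Real.hasDerivAt_sqrt hBne).comp t ((hasDerivAt_id t).add_const B)
    simpa [Function.comp_def] using this
  have h3 : HasDerivAt (fun s : ℝ => (s + B) ^ ((1:ℝ)/4))
      (((1:ℝ)/4) * (t + B) ^ ((1:ℝ)/4 - 1)) t := by
    have := (Real.hasDerivAt_rpow_const (x := t + B) (p := (1:ℝ)/4)
      (Or.inl hBne)).comp t ((hasDerivAt_id t).add_const B)
    simpa [Function.comp_def] using this
  have h4 : HasDerivAt (fun s : ℝ => Real.cos ((s + B) ^ ((1:ℝ)/4)))
      (-Real.sin ((t + B) ^ ((1:ℝ)/4)) * (((1:ℝ)/4) * (t + B) ^ ((1:ℝ)/4 - 1))) t :=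
    (Real.hasDerivAt_cos _).comp t h3
  have h := ((h1.const_mul (2:ℝ)).sub (h2.const_mul (2:ℝ))).add h4
  refine h.congr_deriv ?_
  have hsA : Real.sqrt (t + A) ≠ 0 := by positivity
  have hsB : Real.sqrt (t + B) ≠ 0 := by positivity
  have hr : (t + B) ^ ((1:ℝ)/4 - 1) = ((t + B) ^ ((3:ℝ)/4))⁻¹ := by
    rw [show ((1:ℝ)/4 - 1) = -((3:ℝ)/4) by norm_num, Real.rpow_neg hB.le]
  have hrpos : (0:ℝ) < (t + B) ^ ((3:ℝ)/4) := Real.rpow_pos_of_pos hB _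
  rw [hr]
  field_simp
  ring

lemma quart_close {v w : ℝ} (hv3 : 3 ≤ v) (hw3 : 3 ≤ w) (hd : |v ^ 4 - w ^ 4| ≤ 1) :
    |v - w| ≤ 1/2 := by
  have hf1 : (27:ℝ) ≤ v ^ 3 := by nlinarith [sq_nonneg (v - 3), sq_nonneg (v + 3)]
  have hv2 : (9:ℝ) ≤ v ^ 2 := by nlinarith
  have hw2 : (9:ℝ) ≤ w ^ 2 := by nlinarith
  have hf2 : (27:ℝ) ≤ v ^ 2 * w := by
    nlinarith [mul_le_mul hv2 hw3 (by norm_num : (0:ℝ) ≤ 3) (by positivity : (0:ℝ) ≤ v ^ 2)]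
  have hf3 : (27:ℝ) ≤ v * w ^ 2 := by
    nlinarith [mul_le_mul hv3 hw2 (by norm_num : (0:ℝ) ≤ 9) (by positivity : (0:ℝ) ≤ v)]
  have hf4 : (27:ℝ) ≤ w ^ 3 := by nlinarith [sq_nonneg (w - 3), sq_nonneg (w + 3)]
  have hfacge : (108:ℝ) ≤ v ^ 3 + v ^ 2 * w + v * w ^ 2 + w ^ 3 := by linarith
  have habs := abs_le.mp hd
  rw [abs_le]
  constructor
  · by_contra h
    push_neg at h
    have hprod : (1/2) * 108 ≤ (w - v) * (v ^ 3 + v ^ 2 * w + v * w ^ 2 + w ^ 3) :=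
      mul_le_mul (by linarith) hfacge (by linarith) (by linarith)
    nlinarith [habs.1]
  · by_contra h
    push_neg at h
    have hprod : (1/2) * 108 ≤ (v - w) * (v ^ 3 + v ^ 2 * w + v * w ^ 2 + w ^ 3) :=
      mul_le_mul (by linarith) hfacge (by linarith) (by linarith)
    nlinarith [habs.2]

lemma cosBound (k : ℕ) (B : ℝ) (hB81 : 81 ≤ B)
    (hd : |B - (2 * k * Real.pi + Real.pi / 2) ^ 4| ≤ 1)
    (hc : 82 ≤ (2 * k * Real.pi + Real.pi / 2) ^ 4) :
    |Real.cos (B ^ ((1:ℝ)/4))| ≤ 1/2 := by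
  set w : ℝ := 2 * k * Real.pi + Real.pi / 2 with hw
  have hpi : (0:ℝ) < Real.pi := Real.pi_pos
  have hw0 : 0 ≤ w := by positivity
  have hw3 : (3:ℝ) ≤ w := by
    by_contra h
    push_neg at h
    have : w ^ 4 ≤ 3 ^ 4 := pow_le_pow_left₀ hw0 h.le 4
    norm_num at this
    linarith
  set v : ℝ := B ^ ((1:ℝ)/4) with hv
  have hv0 : 0 ≤ v := Real.rpow_nonneg (by linarith) _
  have hv3 : (3:ℝ) ≤ v := by
    have h81 : ((3:ℝ) ^ 4) ^ ((1:ℝ)/4) ≤ B ^ ((1:ℝ)/4) :=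
      Real.rpow_le_rpow (by positivity) (by norm_num; linarith) (by norm_num)
    rwa [pow4_rpow_quarter (by norm_num : (0:ℝ) ≤ 3)] at h81
  have hv4 : v ^ 4 = B := rpow_quarter_pow4 (by linarith)
  have hdelta : |v - w| ≤ 1/2 := by
    apply quart_close hv3 hw3
    rw [hv4]
    rw [hw] at hd ⊢
    exact hd
  have hform : Real.cos v = -Real.sin (v - w) := by
    have : v = (Real.pi / 2 + (v - w)) + (k:ℝ) * (2 * Real.pi) := by rw [hw]; ring
    rw [show Real.cos v = Real.cos ((Real.pi / 2 + (v - w)) + (k:ℝ) * (2 * Real.pi)) from congrArg Real.cos this, Real.cos_add_nat_mul_two_pi, Real.cos_add, Real.cos_pi_div_two,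
      Real.sin_pi_div_two]
    ring
  rw [hform, abs_neg]
  calc |Real.sin (v - w)| ≤ |v - w| := Real.abs_sin_le_abs
    _ ≤ 1/2 := hdelta

set_option maxHeartbeats 1600000 in
/-- Main properties of H_{a,b}: with c₀ = (2kπ + π/2)⁴ ≥ 82 and 2/√c₀ < 1/4, for
    p(t) = 1/√(t+c₀), q(t) = 1/√(t+c₀) + (1/(4(t+c₀)^(3/4))) sin((t+c₀)^(1/4)) and
    H_{a,b}(T) = ∫₀ᵀ (p(t+a) - q(t+b)) dt, a, b ∈ (-1,1), one has
    limsup H > 1/4, liminf H < -1/4 and limsup H - liminf H ≥ 1. -/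
theorem stmt_6 (k : ℕ) (c₀ : ℝ)
    (hc₀eq : c₀ = (2 * k * Real.pi + Real.pi / 2) ^ 4)
    (hc₀ : 82 ≤ c₀)
    (hc₀' : 2 / Real.sqrt c₀ < 1/4)
    (p q : ℝ → ℝ)
    (hp : ∀ t : ℝ, p t = 1 / Real.sqrt (t + c₀))
    (hq : ∀ t : ℝ, q t = 1 / Real.sqrt (t + c₀) +
      (1 / (4 * (t + c₀) ^ ((3:ℝ)/4))) * Real.sin ((t + c₀) ^ ((1:ℝ)/4)))
    (a b : ℝ) (ha : |a| < 1) (hb : |b| < 1)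
    (H : ℝ → ℝ)
    (hH : ∀ T : ℝ, H T = ∫ t in (0:ℝ)..T, (p (t + a) - q (t + b))) :
    Filter.limsup H Filter.atTop > 1/4 ∧
    Filter.liminf H Filter.atTop < -1/4 ∧
    Filter.limsup H Filter.atTop - Filter.liminf H Filter.atTop ≥ 1 := by
  have hpi : (0:ℝ) < Real.pi := Real.pi_pos
  have hpi3 : (3:ℝ) < Real.pi := Real.pi_gt_three
  obtain ⟨ha1, ha2⟩ := abs_lt.mp ha
  obtain ⟨hb1, hb2⟩ := abs_lt.mp hb
  set A : ℝ := a + c₀ with hAdef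
  set B : ℝ := b + c₀ with hBdef
  have hA81 : (81:ℝ) ≤ A := by rw [hAdef]; linarith
  have hB81 : (81:ℝ) ≤ B := by rw [hBdef]; linarith
  have hAB2 : A ≤ B + 2 := by rw [hAdef, hBdef]; linarith
  have hBA2 : B ≤ A + 2 := by rw [hAdef, hBdef]; linarith
  set F : ℝ → ℝ := fun s => 2 * Real.sqrt (s + A) - 2 * Real.sqrt (s + B)
      + Real.cos ((s + B) ^ ((1:ℝ)/4)) with hFdef
  set G : ℝ → ℝ := fun T => F T - F 0 with hGdef
  -- FTC: H agrees with G on [0, ∞)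
  have key : ∀ T : ℝ, 0 ≤ T → H T = G T := by
    intro T hT
    rw [hH]
    have hfun : (fun t => p (t + a) - q (t + b)) = fun t =>
        1 / Real.sqrt (t + A) - (1 / Real.sqrt (t + B)
          + (1 / (4 * (t + B) ^ ((3:ℝ)/4))) * Real.sin ((t + B) ^ ((1:ℝ)/4))) := by
      funext t
      rw [hp, hq, show t + a + c₀ = t + A from by rw [hAdef]; ring,
        show t + b + c₀ = t + B from by rw [hBdef]; ring]
    have hderiv : ∀ t ∈ Set.uIcc (0:ℝ) T, HasDerivAt F
        (1 / Real.sqrt (t + A) - (1 / Real.sqrt (t + B)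
          + (1 / (4 * (t + B) ^ ((3:ℝ)/4))) * Real.sin ((t + B) ^ ((1:ℝ)/4)))) t := by
      intro t ht
      rw [Set.uIcc_of_le hT] at ht
      exact keyDeriv A B t (by linarith [ht.1]) (by linarith [ht.1])
    have hmem : ∀ x ∈ Set.uIcc (0:ℝ) T, (0:ℝ) < x + A ∧ (0:ℝ) < x + B := by
      intro x hx
      rw [Set.uIcc_of_le hT] at hx
      exact ⟨by linarith [hx.1], by linarith [hx.1]⟩
    have hcont : ContinuousOn (fun t => 1 / Real.sqrt (t + A) - (1 / Real.sqrt (t + B)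
          + (1 / (4 * (t + B) ^ ((3:ℝ)/4))) * Real.sin ((t + B) ^ ((1:ℝ)/4))))
        (Set.uIcc (0:ℝ) T) := by
      have c1 : ContinuousOn (fun t : ℝ => Real.sqrt (t + A)) (Set.uIcc (0:ℝ) T) :=
        (Real.continuous_sqrt.comp (continuous_id.add continuous_const)).continuousOn
      have c2 : ContinuousOn (fun t : ℝ => Real.sqrt (t + B)) (Set.uIcc (0:ℝ) T) :=
        (Real.continuous_sqrt.comp (continuous_id.add continuous_const)).continuousOn
      have cB : ContinuousOn (fun t : ℝ => t + B) (Set.uIcc (0:ℝ) T) :=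
        (continuous_id.add continuous_const).continuousOn
      have c34 : ContinuousOn (fun t : ℝ => (t + B) ^ ((3:ℝ)/4)) (Set.uIcc (0:ℝ) T) :=
        cB.rpow_const (fun x _ => Or.inr (by norm_num))
      have c14 : ContinuousOn (fun t : ℝ => (t + B) ^ ((1:ℝ)/4)) (Set.uIcc (0:ℝ) T) :=
        cB.rpow_const (fun x _ => Or.inr (by norm_num))
      have csin : ContinuousOn (fun t : ℝ => Real.sin ((t + B) ^ ((1:ℝ)/4)))
          (Set.uIcc (0:ℝ) T) := Real.continuous_sin.comp_continuousOn c14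
      apply ContinuousOn.sub
      · exact continuousOn_const.div c1 (fun x hx => by
          have := (hmem x hx).1; positivity)
      · apply ContinuousOn.add
        · exact continuousOn_const.div c2 (fun x hx => by
            have := (hmem x hx).2; positivity)
        · exact (continuousOn_const.div (continuousOn_const.mul c34)
            (fun x hx => by have := (hmem x hx).2; exact mul_ne_zero (by norm_num) (Real.rpow_pos_of_pos this _).ne')).mul csin
    rw [hfun, intervalIntegral.integral_eq_sub_of_hasDerivAt hderiv
      hcont.intervalIntegrable, hGdef]
  have heq : ∀ᶠ T in atTop, H T = G T := eventually_atTop.2 ⟨0, key⟩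
  rw [Filter.limsup_congr heq, Filter.liminf_congr heq]
  -- bound on the sqrt part
  have hgd : ∀ T : ℝ, 0 ≤ T →
      |(2 * Real.sqrt (T + A) - 2 * Real.sqrt (T + B)) -
        (2 * Real.sqrt (0 + A) - 2 * Real.sqrt (0 + B))| ≤ 2/9 := by
    intro T hT
    rcases le_total A B with hAB | hAB
    · have h1 := sqrt_gap' (u := T + A) (v := T + B) (by linarith) (by linarith) (by linarith)
      have h2 := sqrt_gap' (u := 0 + A) (v := 0 + B) (by linarith) (by linarith) (by linarith)
      rw [abs_le]
      exact ⟨by linarith [h1.1, h1.2, h2.1, h2.2], by linarith [h1.1, h1.2, h2.1, h2.2]⟩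
    · have h1 := sqrt_gap' (u := T + B) (v := T + A) (by linarith) (by linarith) (by linarith)
      have h2 := sqrt_gap' (u := 0 + B) (v := 0 + A) (by linarith) (by linarith) (by linarith)
      rw [abs_le]
      exact ⟨by linarith [h1.1, h1.2, h2.1, h2.2], by linarith [h1.1, h1.2, h2.1, h2.2]⟩
  have hGform : ∀ T : ℝ, G T = ((2 * Real.sqrt (T + A) - 2 * Real.sqrt (T + B)) -
      (2 * Real.sqrt (0 + A) - 2 * Real.sqrt (0 + B)))
      + Real.cos ((T + B) ^ ((1:ℝ)/4)) - Real.cos ((0 + B) ^ ((1:ℝ)/4)) := by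
    intro T
    rw [hGdef]
    simp only [hFdef]
    ring
  -- bound on the cosine constant
  have hC : |Real.cos ((0 + B) ^ ((1:ℝ)/4))| ≤ 1/2 := by
    rw [zero_add]
    apply cosBound k B hB81
    · rw [hBdef, ← hc₀eq]
      simpa using hb.le
    · rw [← hc₀eq]; exact hc₀
  obtain ⟨hCl, hCu⟩ := abs_le.mp hC
  -- boundedness of G on atTop
  have hGbdd : ∀ T : ℝ, 0 ≤ T → |G T| ≤ 3 := by
    intro T hT
    have h1 := abs_le.mp (hgd T hT)
    have hc1 := Real.abs_cos_le_one ((T + B) ^ ((1:ℝ)/4))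
    have hc2 := Real.abs_cos_le_one ((0 + B) ^ ((1:ℝ)/4))
    rw [abs_le] at hc1 hc2 ⊢
    rw [hGform T]
    exact ⟨by linarith [h1.1, hc1.1, hc2.2], by linarith [h1.2, hc1.2, hc2.1]⟩
  have hbdd1 : IsBoundedUnder (· ≤ ·) atTop G :=
    ⟨3, eventually_map.mpr (eventually_atTop.2 ⟨0, fun T hT => (abs_le.mp (hGbdd T hT)).2⟩)⟩
  have hbdd2 : IsBoundedUnder (· ≥ ·) atTop G :=
    ⟨-3, eventually_map.mpr (eventually_atTop.2 ⟨0, fun T hT => (abs_le.mp (hGbdd T hT)).1⟩)⟩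
  -- frequent points where the cosine is 1
  have hfreq1 : ∃ᶠ T in atTop, 0 ≤ T ∧ Real.cos ((T + B) ^ ((1:ℝ)/4)) = 1 := by
    rw [Filter.frequently_atTop]
    intro M
    set n : ℕ := ⌈|M| + |B| + 1⌉₊ with hn
    have hnge : |M| + |B| + 1 ≤ (n:ℝ) := Nat.le_ceil _
    have hn1 : (1:ℝ) ≤ (n:ℝ) := by
      have h0 : (0:ℝ) ≤ |M| + |B| := by positivity
      linarith
    set x : ℝ := (n:ℝ) * (2 * Real.pi) with hx
    have hx1 : (1:ℝ) ≤ x := by rw [hx]; nlinarith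
    have hxn : (n:ℝ) ≤ x := by rw [hx]; nlinarith
    have hx4 : x ≤ x ^ 4 := self_le_pow4 hx1
    refine ⟨x ^ 4 - B, ?_, ?_, ?_⟩
    · linarith [le_abs_self M, le_abs_self B]
    · linarith [abs_nonneg M, le_abs_self B]
    · rw [show x ^ 4 - B + B = x ^ 4 from by ring,
        pow4_rpow_quarter (by linarith : (0:ℝ) ≤ x), hx]
      exact Real.cos_nat_mul_two_pi n
  -- frequent points where the cosine is -1
  have hfreq2 : ∃ᶠ T in atTop, 0 ≤ T ∧ Real.cos ((T + B) ^ ((1:ℝ)/4)) = -1 := by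
    rw [Filter.frequently_atTop]
    intro M
    set n : ℕ := ⌈|M| + |B| + 1⌉₊ with hn
    have hnge : |M| + |B| + 1 ≤ (n:ℝ) := Nat.le_ceil _
    have hn1 : (1:ℝ) ≤ (n:ℝ) := by
      have h0 : (0:ℝ) ≤ |M| + |B| := by positivity
      linarith
    set x : ℝ := (n:ℝ) * (2 * Real.pi) + Real.pi with hx
    have hx1 : (1:ℝ) ≤ x := by rw [hx]; nlinarith
    have hxn : (n:ℝ) ≤ x := by rw [hx]; nlinarith
    have hx4 : x ≤ x ^ 4 := self_le_pow4 hx1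
    refine ⟨x ^ 4 - B, ?_, ?_, ?_⟩
    · linarith [le_abs_self M, le_abs_self B]
    · linarith [abs_nonneg M, le_abs_self B]
    · rw [show x ^ 4 - B + B = x ^ 4 from by ring,
        pow4_rpow_quarter (by linarith : (0:ℝ) ≤ x), hx]
      exact Real.cos_nat_mul_two_pi_add_pi n
  -- limsup and liminf bounds
  have hup : 7/9 - Real.cos ((0 + B) ^ ((1:ℝ)/4)) ≤ limsup G atTop := by
    apply le_limsup_of_frequently_le _ hbdd1
    refine hfreq1.mono ?_
    rintro T ⟨hT0, hcos⟩
    have h1 := (abs_le.mp (hgd T hT0)).1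
    rw [hGform T, hcos]
    linarith
  have hdown : liminf G atTop ≤ -(7/9) - Real.cos ((0 + B) ^ ((1:ℝ)/4)) := by
    apply liminf_le_of_frequently_le _ hbdd2
    refine hfreq2.mono ?_
    rintro T ⟨hT0, hcos⟩
    have h1 := (abs_le.mp (hgd T hT0)).2
    rw [hGform T, hcos]
    linarith
  refine ⟨by linarith, by linarith, by linarith⟩
end

section
/- Let q, φ, g be as above. Then g is C¹ on [0, q(-1)); in particular g'(r) → 0 = g'(0) as r → 0⁺. -/
open Real Set Filter Topology

noncomputable def Qd (c₀ t : ℝ) : ℝ :=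
  -(1/2) * (t+c₀) ^ (-(3:ℝ)/2) + (1/4) * Real.cos ((t+c₀) ^ ((1:ℝ)/4)) * (t+c₀) ^ (-(3:ℝ)/2)
    - (3/4) * Real.sin ((t+c₀) ^ ((1:ℝ)/4)) * (t+c₀) ^ (-(7:ℝ)/4)

noncomputable def Qdd (c₀ t : ℝ) : ℝ :=
  (3/4) * (t+c₀) ^ (-(5:ℝ)/2) - (1/16) * Real.sin ((t+c₀) ^ ((1:ℝ)/4)) * (t+c₀) ^ (-(9:ℝ)/4)
    - (9/16) * Real.cos ((t+c₀) ^ ((1:ℝ)/4)) * (t+c₀) ^ (-(5:ℝ)/2)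
    + (21/16) * Real.sin ((t+c₀) ^ ((1:ℝ)/4)) * (t+c₀) ^ (-(11:ℝ)/4)

lemma aux_w_le {u : ℝ} (hu : (81:ℝ) ≤ u) : u ^ (-(1:ℝ)/4) ≤ 1/3 := by
  have hu0 : (0:ℝ) < u := by linarith
  have h81 : (81:ℝ) ^ ((1:ℝ)/4) = 3 := by
    rw [show (81:ℝ) = 3 ^ (4:ℕ) by norm_num, ← Real.rpow_natCast 3 4,
      ← Real.rpow_mul (by norm_num)]
    norm_num
  have h3 : (3:ℝ) ≤ u ^ ((1:ℝ)/4) := by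
    rw [← h81]; exact Real.rpow_le_rpow (by norm_num) hu (by norm_num)
  rw [show -(1:ℝ)/4 = -((1:ℝ)/4) by ring, Real.rpow_neg hu0.le]
  have := inv_anti₀ (by norm_num : (0:ℝ) < 3) h3
  linarith

lemma hasDerivAt_aux_pow (c₀ : ℝ) (p : ℝ) {t : ℝ} (ht : 0 < t + c₀) :
    HasDerivAt (fun s : ℝ => (s + c₀) ^ p) (p * (t + c₀) ^ (p - 1)) t := by
  have h1 : HasDerivAt (fun s : ℝ => s + c₀) 1 t := (hasDerivAt_id t).add_const c₀
  have h2 := Real.hasDerivAt_rpow_const (x := t + c₀) (p := p) (Or.inl (ne_of_gt ht))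
  simpa [Function.comp_def] using h2.comp t h1

lemma hasDerivAt_aux_sin (c₀ : ℝ) {t : ℝ} (ht : 0 < t + c₀) :
    HasDerivAt (fun s : ℝ => Real.sin ((s + c₀) ^ ((1:ℝ)/4)))
      (Real.cos ((t + c₀) ^ ((1:ℝ)/4)) * ((1/4) * (t + c₀) ^ (-(3:ℝ)/4))) t := by
  have h := (Real.hasDerivAt_sin ((t + c₀) ^ ((1:ℝ)/4))).comp t (hasDerivAt_aux_pow c₀ (1/4) ht)
  rw [show (1:ℝ)/4 - 1 = -(3:ℝ)/4 by norm_num] at h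
  exact h

lemma hasDerivAt_aux_cos (c₀ : ℝ) {t : ℝ} (ht : 0 < t + c₀) :
    HasDerivAt (fun s : ℝ => Real.cos ((s + c₀) ^ ((1:ℝ)/4)))
      (-Real.sin ((t + c₀) ^ ((1:ℝ)/4)) * ((1/4) * (t + c₀) ^ (-(3:ℝ)/4))) t := by
  have h := (Real.hasDerivAt_cos ((t + c₀) ^ ((1:ℝ)/4))).comp t (hasDerivAt_aux_pow c₀ (1/4) ht)
  rw [show (1:ℝ)/4 - 1 = -(3:ℝ)/4 by norm_num] at h
  exact h

lemma hasDerivAt_q_aux (c₀ : ℝ) (q : ℝ → ℝ)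
    (hq : ∀ t : ℝ, q t = 1 / Real.sqrt (t + c₀) +
      Real.sin ((t + c₀) ^ ((1:ℝ)/4)) / (t + c₀) ^ ((3:ℝ)/4))
    {t : ℝ} (ht : 0 < t + c₀) : HasDerivAt q (Qd c₀ t) t := by
  have hmem : {s : ℝ | 0 < s + c₀} ∈ 𝓝 t :=
    (isOpen_lt continuous_const (continuous_id.add continuous_const)).mem_nhds ht
  have hev : q =ᶠ[𝓝 t]
      fun s => (s + c₀) ^ (-(1:ℝ)/2) + Real.sin ((s + c₀) ^ ((1:ℝ)/4)) * (s + c₀) ^ (-(3:ℝ)/4) := by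
    filter_upwards [hmem] with s hs
    have hs' : (0:ℝ) ≤ s + c₀ := le_of_lt hs
    have e1 : 1 / Real.sqrt (s + c₀) = (s + c₀) ^ (-(1:ℝ)/2) := by
      rw [Real.sqrt_eq_rpow, one_div, show -(1:ℝ)/2 = -((1:ℝ)/2) by ring, Real.rpow_neg hs']
    have e2 : Real.sin ((s + c₀) ^ ((1:ℝ)/4)) / (s + c₀) ^ ((3:ℝ)/4) =
        Real.sin ((s + c₀) ^ ((1:ℝ)/4)) * (s + c₀) ^ (-(3:ℝ)/4) := by
      rw [show -(3:ℝ)/4 = -((3:ℝ)/4) by ring, Real.rpow_neg hs', div_eq_mul_inv]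
    rw [hq s, e1, e2]
  have h1 := hasDerivAt_aux_pow c₀ (-(1:ℝ)/2) ht
  have h2 := (hasDerivAt_aux_sin c₀ ht).mul (hasDerivAt_aux_pow c₀ (-(3:ℝ)/4) ht)
  have h := h1.add h2
  have hXX : (t+c₀) ^ (-(3:ℝ)/4) * (t+c₀) ^ (-(3:ℝ)/4) = (t+c₀) ^ (-(3:ℝ)/2) := by
    rw [← Real.rpow_add ht]; norm_num
  have heq : -(1:ℝ)/2 * (t + c₀) ^ (-(1:ℝ)/2 - 1) +
      (Real.cos ((t + c₀) ^ ((1:ℝ)/4)) * ((1/4) * (t + c₀) ^ (-(3:ℝ)/4)) * (t + c₀) ^ (-(3:ℝ)/4) +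
        Real.sin ((t + c₀) ^ ((1:ℝ)/4)) * (-(3:ℝ)/4 * (t + c₀) ^ (-(3:ℝ)/4 - 1))) = Qd c₀ t := by
    unfold Qd
    rw [show -(1:ℝ)/2 - 1 = -(3:ℝ)/2 by norm_num, show -(3:ℝ)/4 - 1 = -(7:ℝ)/4 by norm_num]
    linear_combination (Real.cos ((t + c₀) ^ ((1:ℝ)/4)) / 4) * hXX
  rw [heq] at h
  exact h.congr_of_eventuallyEq hev

lemma hasDerivAt_Qd (c₀ : ℝ) {t : ℝ} (ht : 0 < t + c₀) :
    HasDerivAt (Qd c₀) (Qdd c₀ t) t := by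
  have h1 := (hasDerivAt_aux_pow c₀ (-(3:ℝ)/2) ht).const_mul (-(1/2) : ℝ)
  have h2 := ((hasDerivAt_aux_cos c₀ ht).const_mul ((1:ℝ)/4)).mul
    (hasDerivAt_aux_pow c₀ (-(3:ℝ)/2) ht)
  have h3 := ((hasDerivAt_aux_sin c₀ ht).const_mul ((3:ℝ)/4)).mul
    (hasDerivAt_aux_pow c₀ (-(7:ℝ)/4) ht)
  have h := (h1.add h2).sub h3
  have h94 : (t+c₀) ^ (-(3:ℝ)/4) * (t+c₀) ^ (-(3:ℝ)/2) = (t+c₀) ^ (-(9:ℝ)/4) := by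
    rw [← Real.rpow_add ht]; norm_num
  have h52 : (t+c₀) ^ (-(3:ℝ)/4) * (t+c₀) ^ (-(7:ℝ)/4) = (t+c₀) ^ (-(5:ℝ)/2) := by
    rw [← Real.rpow_add ht]; norm_num
  have heq : -(1/2:ℝ) * (-(3:ℝ)/2 * (t + c₀) ^ (-(3:ℝ)/2 - 1)) +
      ((1:ℝ)/4 * (-Real.sin ((t + c₀) ^ ((1:ℝ)/4)) * ((1/4) * (t + c₀) ^ (-(3:ℝ)/4))) *
          (t + c₀) ^ (-(3:ℝ)/2) +
        (1:ℝ)/4 * Real.cos ((t + c₀) ^ ((1:ℝ)/4)) * (-(3:ℝ)/2 * (t + c₀) ^ (-(3:ℝ)/2 - 1))) -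
      ((3:ℝ)/4 * (Real.cos ((t + c₀) ^ ((1:ℝ)/4)) * ((1/4) * (t + c₀) ^ (-(3:ℝ)/4))) *
          (t + c₀) ^ (-(7:ℝ)/4) +
        (3:ℝ)/4 * Real.sin ((t + c₀) ^ ((1:ℝ)/4)) * (-(7:ℝ)/4 * (t + c₀) ^ (-(7:ℝ)/4 - 1))) =
      Qdd c₀ t := by
    unfold Qdd
    rw [show -(3:ℝ)/2 - 1 = -(5:ℝ)/2 by norm_num, show -(7:ℝ)/4 - 1 = -(11:ℝ)/4 by norm_num]
    linear_combination (-(Real.sin ((t + c₀) ^ ((1:ℝ)/4))) / 16) * h94 +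
      (-(3 * Real.cos ((t + c₀) ^ ((1:ℝ)/4))) / 16) * h52
  rw [heq] at h
  exact h

lemma Qd_bounds (c₀ : ℝ) {t : ℝ} (h81 : (81:ℝ) ≤ t + c₀) :
    Qd c₀ t ≤ -(1/8) * (t+c₀) ^ (-(3:ℝ)/2) ∧ -(t+c₀) ^ (-(3:ℝ)/2) ≤ Qd c₀ t := by
  have ht : (0:ℝ) < t + c₀ := by linarith
  have hA : (0:ℝ) < (t+c₀) ^ (-(3:ℝ)/2) := Real.rpow_pos_of_pos ht _
  have hw0 : 0 < (t+c₀) ^ (-(1:ℝ)/4) := Real.rpow_pos_of_pos ht _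
  have hw3 : (t+c₀) ^ (-(1:ℝ)/4) ≤ 1/3 := aux_w_le h81
  have h74 : (t+c₀) ^ (-(7:ℝ)/4) = (t+c₀) ^ (-(3:ℝ)/2) * (t+c₀) ^ (-(1:ℝ)/4) := by
    rw [← Real.rpow_add ht]; norm_num
  unfold Qd
  rw [h74]
  set u := t + c₀
  set s := Real.sin (u ^ ((1:ℝ)/4))
  set c := Real.cos (u ^ ((1:ℝ)/4))
  set w := u ^ (-(1:ℝ)/4)
  set A := u ^ (-(3:ℝ)/2)
  have hsc : s^2 + c^2 = 1 := Real.sin_sq_add_cos_sq _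
  have hs1 : -1 ≤ s := Real.neg_one_le_sin _
  have hs2 : s ≤ 1 := Real.sin_le_one _
  have hc1 : -1 ≤ c := Real.neg_one_le_cos _
  have hc2 : c ≤ 1 := Real.cos_le_one _
  constructor
  · have key : c/4 - 3/4 * s * w ≤ 3/8 := by
      nlinarith [sq_nonneg (s/4 + 3*c*w/4), sq_nonneg w, hsc, hw3, hw0.le]
    nlinarith [mul_nonneg hA.le (sub_nonneg.2 key)]
  · have key : 0 ≤ 1/2 + c/4 - 3/4 * s * w := by
      nlinarith [mul_le_mul_of_nonneg_right hs2 hw0.le]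
    nlinarith [mul_nonneg hA.le key]

lemma Qdd_abs_le (c₀ : ℝ) {t : ℝ} (h81 : (81:ℝ) ≤ t + c₀) :
    |Qdd c₀ t| ≤ (t+c₀) ^ (-(9:ℝ)/4) := by
  have ht : (0:ℝ) < t + c₀ := by linarith
  have hX : (0:ℝ) < (t+c₀) ^ (-(9:ℝ)/4) := Real.rpow_pos_of_pos ht _
  have hw0 : 0 < (t+c₀) ^ (-(1:ℝ)/4) := Real.rpow_pos_of_pos ht _
  have hw3 : (t+c₀) ^ (-(1:ℝ)/4) ≤ 1/3 := aux_w_le h81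
  have h52 : (t+c₀) ^ (-(5:ℝ)/2) = (t+c₀) ^ (-(9:ℝ)/4) * (t+c₀) ^ (-(1:ℝ)/4) := by
    rw [← Real.rpow_add ht]; norm_num
  have h114 : (t+c₀) ^ (-(11:ℝ)/4) =
      (t+c₀) ^ (-(9:ℝ)/4) * (t+c₀) ^ (-(1:ℝ)/4) * (t+c₀) ^ (-(1:ℝ)/4) := by
    rw [← Real.rpow_add ht, ← Real.rpow_add ht]; norm_num
  set u := t + c₀
  set s := Real.sin (u ^ ((1:ℝ)/4))
  set c := Real.cos (u ^ ((1:ℝ)/4))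
  set w := u ^ (-(1:ℝ)/4)
  set X := u ^ (-(9:ℝ)/4)
  have hs1 : -1 ≤ s := Real.neg_one_le_sin _
  have hs2 : s ≤ 1 := Real.sin_le_one _
  have hc1 : -1 ≤ c := Real.neg_one_le_cos _
  have hc2 : c ≤ 1 := Real.cos_le_one _
  have hfac : Qdd c₀ t = X * (3/4*w - 1/16*s - 9/16*c*w + 21/16*s*(w*w)) := by
    unfold Qdd; rw [h52, h114]; ring
  have hww : w * w ≤ 1/9 := by nlinarith
  have hcw1 : -w ≤ c*w := by nlinarith
  have hcw2 : c*w ≤ w := by nlinarith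
  have hsw1 : -(w*w) ≤ s*(w*w) := by nlinarith
  have hsw2 : s*(w*w) ≤ w*w := by nlinarith
  have hinner : |3/4*w - 1/16*s - 9/16*c*w + 21/16*s*(w*w)| ≤ 1 := by
    rw [abs_le]; constructor <;> nlinarith
  calc |Qdd c₀ t| = X * |3/4*w - 1/16*s - 9/16*c*w + 21/16*s*(w*w)| := by
        rw [hfac, abs_mul, abs_of_pos hX]
    _ ≤ X * 1 := by exact mul_le_mul_of_nonneg_left hinner hX.le
    _ = X := mul_one X

lemma q_lower (c₀ : ℝ) (q : ℝ → ℝ)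
    (hq : ∀ t : ℝ, q t = 1 / Real.sqrt (t + c₀) +
      Real.sin ((t + c₀) ^ ((1:ℝ)/4)) / (t + c₀) ^ ((3:ℝ)/4))
    {t : ℝ} (h81 : (81:ℝ) ≤ t + c₀) : (2/3) * (t+c₀) ^ (-(1:ℝ)/2) ≤ q t := by
  have ht : (0:ℝ) < t + c₀ := by linarith
  have hs' : (0:ℝ) ≤ t + c₀ := ht.le
  have e1 : 1 / Real.sqrt (t + c₀) = (t + c₀) ^ (-(1:ℝ)/2) := by
    rw [Real.sqrt_eq_rpow, one_div, show -(1:ℝ)/2 = -((1:ℝ)/2) by ring, Real.rpow_neg hs']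
  have e2 : Real.sin ((t + c₀) ^ ((1:ℝ)/4)) / (t + c₀) ^ ((3:ℝ)/4) =
      Real.sin ((t + c₀) ^ ((1:ℝ)/4)) * (t + c₀) ^ (-(3:ℝ)/4) := by
    rw [show -(3:ℝ)/4 = -((3:ℝ)/4) by ring, Real.rpow_neg hs', div_eq_mul_inv]
  have h34 : (t+c₀) ^ (-(3:ℝ)/4) = (t+c₀) ^ (-(1:ℝ)/2) * (t+c₀) ^ (-(1:ℝ)/4) := by
    rw [← Real.rpow_add ht]; norm_num
  have hB : (0:ℝ) < (t+c₀) ^ (-(1:ℝ)/2) := Real.rpow_pos_of_pos ht _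
  have hw0 : 0 < (t+c₀) ^ (-(1:ℝ)/4) := Real.rpow_pos_of_pos ht _
  have hw3 : (t+c₀) ^ (-(1:ℝ)/4) ≤ 1/3 := aux_w_le h81
  have hs1 : -1 ≤ Real.sin ((t + c₀) ^ ((1:ℝ)/4)) := Real.neg_one_le_sin _
  rw [hq t, e1, e2, h34]
  nlinarith [mul_le_mul_of_nonneg_right hs1 (mul_pos hB hw0).le,
    mul_le_mul_of_nonneg_left hw3 hB.le]

lemma rpow_neg_half_cube {u : ℝ} (hu : 0 < u) :
    u ^ (-(3:ℝ)/2) = (u ^ (-(1:ℝ)/2)) ^ (3:ℕ) := by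
  rw [← Real.rpow_natCast (u ^ (-(1:ℝ)/2)) 3, ← Real.rpow_mul hu.le]; norm_num

lemma rpow_neg_three_quarter {u : ℝ} (hu : 0 < u) :
    u ^ (-(3:ℝ)/4) = (u ^ (-(1:ℝ)/2)) ^ ((3:ℝ)/2) := by
  rw [← Real.rpow_mul hu.le]; norm_num

lemma continuousAt_Qdd (c₀ : ℝ) {t : ℝ} (ht : 0 < t + c₀) : ContinuousAt (Qdd c₀) t := by
  have hid : ContinuousAt (fun s : ℝ => s + c₀) t := (continuous_id.add continuous_const).continuousAt
  have hp : ∀ p : ℝ, ContinuousAt (fun s : ℝ => (s + c₀) ^ p) t :=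
    fun p => ContinuousAt.comp (f := fun s : ℝ => s + c₀) (x := t) (Real.continuousAt_rpow_const (t + c₀) p (Or.inl (ne_of_gt ht))) hid
  have hs : ContinuousAt (fun s : ℝ => Real.sin ((s + c₀) ^ ((1:ℝ)/4))) t :=
    Real.continuous_sin.continuousAt.comp (hp _)
  have hc : ContinuousAt (fun s : ℝ => Real.cos ((s + c₀) ^ ((1:ℝ)/4))) t :=
    Real.continuous_cos.continuousAt.comp (hp _)
  exact (((continuousAt_const.mul (hp _)).sub ((continuousAt_const.mul hs).mul (hp _))).sub
    ((continuousAt_const.mul hc).mul (hp _))).add ((continuousAt_const.mul hs).mul (hp _))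

/-- With q, φ, g as before, g is C¹ on [0, q(-1)); in particular
    g'(r) → 0 = g'(0) as r → 0⁺. -/
theorem stmt_16 (c₀ : ℝ) (hc₀ : 82 ≤ c₀) (q φ g : ℝ → ℝ)
    (hq : ∀ t : ℝ, q t = 1 / Real.sqrt (t + c₀) +
      Real.sin ((t + c₀) ^ ((1:ℝ)/4)) / (t + c₀) ^ ((3:ℝ)/4))
    (hanti : StrictAntiOn q (Set.Ici (-1)))
    (hlim : Filter.Tendsto q Filter.atTop (nhds 0))
    (hφ : ∀ t : ℝ, -1 ≤ t → φ (q t) = t)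
    (hφ' : ∀ r : ℝ, r ∈ Set.Ioo 0 (q (-1)) → -1 < φ r ∧ q (φ r) = r)
    (hg : ∀ r : ℝ, r ∈ Set.Ioo 0 (q (-1)) → g r = deriv q (φ r))
    (hg0 : g 0 = 0) :
    ContDiffOn ℝ 1 g (Set.Ico 0 (q (-1))) ∧
    Filter.Tendsto (fun r => deriv g r) (nhdsWithin 0 (Set.Ioi 0)) (nhds 0) := by
  have hb : ∀ t : ℝ, -1 ≤ t → (81:ℝ) ≤ t + c₀ := fun t ht => by linarith
  have hqpos : ∀ t : ℝ, -1 ≤ t → 0 < q t := by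
    intro t ht
    have h1 := q_lower c₀ q hq (hb t ht)
    have h2 : 0 < (t+c₀) ^ (-(1:ℝ)/2) := Real.rpow_pos_of_pos (by linarith [hb t ht]) _
    linarith
  set b := q (-1) with hbdef
  have hb0 : 0 < b := hqpos (-1) le_rfl
  have hqlt : ∀ t : ℝ, -1 < t → q t < b := fun t ht =>
    hanti (mem_Ici.2 le_rfl) (mem_Ici.2 ht.le) ht
  have himg : ∀ t : ℝ, -1 < t → q t ∈ Ioo 0 b := fun t ht => ⟨hqpos t ht.le, hqlt t ht⟩
  have hqd : ∀ t : ℝ, -1 ≤ t → HasDerivAt q (Qd c₀ t) t := fun t ht =>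
    hasDerivAt_q_aux c₀ q hq (by linarith [hb t ht])
  have hQdneg : ∀ t : ℝ, -1 ≤ t → Qd c₀ t < 0 := by
    intro t ht
    have h := (Qd_bounds c₀ (hb t ht)).1
    have h2 : 0 < (t+c₀) ^ (-(3:ℝ)/2) := Real.rpow_pos_of_pos (by linarith [hb t ht]) _
    nlinarith
  have hφanti : StrictAntiOn φ (Ioo 0 b) := by
    intro r1 h1 r2 h2 h12
    obtain ⟨ht1, hq1⟩ := hφ' r1 h1
    obtain ⟨ht2, hq2⟩ := hφ' r2 h2
    by_contra h
    push_neg at h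
    rcases eq_or_lt_of_le h with heq | hlt
    · rw [← hq1, ← hq2, ← heq] at h12; exact lt_irrefl _ h12
    · have := hanti (mem_Ici.2 ht1.le) (mem_Ici.2 ht2.le) hlt
      rw [hq1, hq2] at this; linarith
  have hφcont : ∀ r ∈ Ioo 0 b, ContinuousAt φ r := by
    intro r hr
    have hmono : StrictMonoOn (fun x => -φ x) (Ioo 0 b) := fun x hx y hy hxy =>
      neg_lt_neg (hφanti hx hy hxy)
    have himage : (fun x => -φ x) '' (Ioo 0 b) = Iio 1 := by
      ext x
      simp only [mem_image, mem_Iio]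
      constructor
      · rintro ⟨y, hy, rfl⟩
        have := (hφ' y hy).1
        linarith
      · intro hx
        refine ⟨q (-x), himg (-x) (by linarith), ?_⟩
        rw [hφ (-x) (by linarith)]
        ring
    have hmem : (fun x => -φ x) '' (Ioo 0 b) ∈ 𝓝 (-φ r) := by
      rw [himage]
      exact Iio_mem_nhds (by linarith [(hφ' r hr).1])
    have hc := hmono.continuousAt_of_image_mem_nhds (Ioo_mem_nhds hr.1 hr.2) hmem
    have hc2 : ContinuousAt (fun x => -(-φ x)) r := hc.neg
    simpa using hc2
  have hφd : ∀ r ∈ Ioo 0 b, HasDerivAt φ (Qd c₀ (φ r))⁻¹ r := by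
    intro r hr
    obtain ⟨ht, hqt⟩ := hφ' r hr
    refine HasDerivAt.of_local_left_inverse (hφcont r hr) (hqd (φ r) ht.le)
      (ne_of_lt (hQdneg _ ht.le)) ?_
    filter_upwards [Ioo_mem_nhds hr.1 hr.2] with x hx
    exact (hφ' x hx).2
  have hgd : ∀ r ∈ Ioo 0 b, HasDerivAt g (Qdd c₀ (φ r) * (Qd c₀ (φ r))⁻¹) r := by
    intro r hr
    obtain ⟨ht, hqt⟩ := hφ' r hr
    have hF : HasDerivAt (fun x => Qd c₀ (φ x)) (Qdd c₀ (φ r) * (Qd c₀ (φ r))⁻¹) r :=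
      (hasDerivAt_Qd c₀ (by linarith [hb (φ r) ht.le])).comp r (hφd r hr)
    refine hF.congr_of_eventuallyEq ?_
    filter_upwards [Ioo_mem_nhds hr.1 hr.2] with x hx
    rw [hg x hx, (hqd (φ x) (hφ' x hx).1.le).deriv]
  have hrbound : ∀ r ∈ Ioo 0 b, ((φ r) + c₀) ^ (-(1:ℝ)/2) ≤ 3/2 * r := by
    intro r hr
    obtain ⟨ht, hqt⟩ := hφ' r hr
    have := q_lower c₀ q hq (hb (φ r) ht.le)
    rw [hqt] at this; linarith
  have hgval : ∀ r ∈ Ioo 0 b, |g r| ≤ 4 * r ^ (3:ℕ) := by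
    intro r hr
    obtain ⟨ht, hqt⟩ := hφ' r hr
    have h81 := hb (φ r) ht.le
    have hu : (0:ℝ) < φ r + c₀ := by linarith
    have hB : (0:ℝ) < (φ r + c₀) ^ (-(1:ℝ)/2) := Real.rpow_pos_of_pos hu _
    have hQ := Qd_bounds c₀ h81
    have hgr : g r = Qd c₀ (φ r) := by rw [hg r hr, (hqd (φ r) ht.le).deriv]
    have habs : |g r| ≤ (φ r + c₀) ^ (-(3:ℝ)/2) := by
      rw [hgr, abs_le]
      constructor
      · linarith [hQ.2]
      · nlinarith [Real.rpow_pos_of_pos hu (-(3:ℝ)/2), hQ.1]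
    calc |g r| ≤ (φ r + c₀) ^ (-(3:ℝ)/2) := habs
      _ = ((φ r + c₀) ^ (-(1:ℝ)/2)) ^ (3:ℕ) := rpow_neg_half_cube hu
      _ ≤ (3/2 * r) ^ (3:ℕ) := pow_le_pow_left₀ hB.le (hrbound r hr) 3
      _ ≤ 4 * r ^ (3:ℕ) := by nlinarith [pow_nonneg hr.1.le 3]
  have hg'bd : ∀ r ∈ Ioo 0 b, |Qdd c₀ (φ r) * (Qd c₀ (φ r))⁻¹| ≤ 16 * r ^ ((3:ℝ)/2) := by
    intro r hr
    obtain ⟨ht, hqt⟩ := hφ' r hr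
    have h81 := hb (φ r) ht.le
    have hu : (0:ℝ) < φ r + c₀ := by linarith
    have hQ := Qd_bounds c₀ h81
    have hQdd := Qdd_abs_le c₀ h81
    have hA : (0:ℝ) < (φ r + c₀) ^ (-(3:ℝ)/2) := Real.rpow_pos_of_pos hu _
    have hQdabs : 1/8 * (φ r + c₀) ^ (-(3:ℝ)/2) ≤ |Qd c₀ (φ r)| := by
      rw [abs_of_neg (hQdneg _ ht.le)]
      linarith [hQ.1]
    have hQdpos : (0:ℝ) < |Qd c₀ (φ r)| := abs_pos.2 (ne_of_lt (hQdneg _ ht.le))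
    have hdivle : |Qdd c₀ (φ r)| / |Qd c₀ (φ r)| ≤
        (φ r + c₀) ^ (-(9:ℝ)/4) / (1/8 * (φ r + c₀) ^ (-(3:ℝ)/2)) :=
      div_le_div₀ (Real.rpow_pos_of_pos hu _).le hQdd (by positivity) hQdabs
    have hsplit : (φ r + c₀) ^ (-(9:ℝ)/4) = (φ r + c₀) ^ (-(3:ℝ)/4) * (φ r + c₀) ^ (-(3:ℝ)/2) := by
      rw [← Real.rpow_add hu]; norm_num
    have hdiveq : (φ r + c₀) ^ (-(9:ℝ)/4) / (1/8 * (φ r + c₀) ^ (-(3:ℝ)/2)) =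
        8 * (φ r + c₀) ^ (-(3:ℝ)/4) := by
      rw [hsplit]
      field_simp
    have h34le : (φ r + c₀) ^ (-(3:ℝ)/4) ≤ (3/2 * r) ^ ((3:ℝ)/2) := by
      rw [rpow_neg_three_quarter hu]
      exact Real.rpow_le_rpow (Real.rpow_pos_of_pos hu _).le (hrbound r hr) (by norm_num)
    have hmulrpow : (3/2 * r) ^ ((3:ℝ)/2) = (3/2:ℝ) ^ ((3:ℝ)/2) * r ^ ((3:ℝ)/2) :=
      Real.mul_rpow (by norm_num) hr.1.le
    have h32le2 : (3/2:ℝ) ^ ((3:ℝ)/2) ≤ 2 := by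
      have h0 : ((3/2:ℝ) ^ ((3:ℝ)/2)) ^ (2:ℕ) = 27/8 := by
        rw [← Real.rpow_natCast ((3/2:ℝ) ^ ((3:ℝ)/2)) 2, ← Real.rpow_mul (by norm_num),
          show (3:ℝ)/2 * ((2:ℕ):ℝ) = ((3:ℕ):ℝ) by norm_num, Real.rpow_natCast]
        norm_num
      have hx : (0:ℝ) ≤ (3/2:ℝ) ^ ((3:ℝ)/2) := Real.rpow_nonneg (by norm_num) _
      nlinarith
    have hrp : (0:ℝ) ≤ r ^ ((3:ℝ)/2) := Real.rpow_nonneg hr.1.le _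
    calc |Qdd c₀ (φ r) * (Qd c₀ (φ r))⁻¹| = |Qdd c₀ (φ r)| / |Qd c₀ (φ r)| := by
          rw [abs_mul, abs_inv, div_eq_mul_inv]
      _ ≤ (φ r + c₀) ^ (-(9:ℝ)/4) / (1/8 * (φ r + c₀) ^ (-(3:ℝ)/2)) := hdivle
      _ = 8 * (φ r + c₀) ^ (-(3:ℝ)/4) := hdiveq
      _ ≤ 8 * ((3/2:ℝ) ^ ((3:ℝ)/2) * r ^ ((3:ℝ)/2)) := by
          rw [← hmulrpow]; linarith [h34le]
      _ ≤ 16 * r ^ ((3:ℝ)/2) := by nlinarith [h32le2, hrp]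
  have hg0' : HasDerivWithinAt g 0 (Ico 0 b) 0 := by
    rw [hasDerivWithinAt_iff_tendsto_slope, Ico_diff_left]
    apply squeeze_zero_norm' (a := fun x : ℝ => 4 * x ^ (2:ℕ))
    · filter_upwards [self_mem_nhdsWithin] with x hx
      have hx0 : 0 < x := hx.1
      rw [slope_def_field, hg0, sub_zero, sub_zero, Real.norm_eq_abs, abs_div, abs_of_pos hx0,
        div_le_iff₀ hx0]
      calc |g x| ≤ 4 * x ^ (3:ℕ) := hgval x hx
        _ = 4 * x ^ (2:ℕ) * x := by ring
    · have h2 : Tendsto (fun x : ℝ => 4 * x ^ (2:ℕ)) (𝓝 0) (𝓝 0) := by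
        simpa using (show Continuous (fun x : ℝ => 4 * x ^ (2:ℕ)) by fun_prop).tendsto (0:ℝ)
      exact h2.mono_left nhdsWithin_le_nhds
  have hdiffOn : DifferentiableOn ℝ g (Ico 0 b) := by
    intro r hr
    rcases eq_or_lt_of_le hr.1 with heq | hpos
    · rw [← heq]
      exact hg0'.differentiableWithinAt
    · exact ((hgd r ⟨hpos, hr.2⟩).differentiableAt).differentiableWithinAt
  have huniq : UniqueDiffOn ℝ (Ico (0:ℝ) b) := uniqueDiffOn_Ico 0 b
  have hdw0 : derivWithin g (Ico 0 b) 0 = 0 := hg0'.derivWithin (huniq 0 ⟨le_rfl, hb0⟩)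
  have hdwr : ∀ r ∈ Ioo 0 b, derivWithin g (Ico 0 b) r = Qdd c₀ (φ r) * (Qd c₀ (φ r))⁻¹ := by
    intro r hr
    rw [derivWithin_of_mem_nhds (mem_of_superset (Ioo_mem_nhds hr.1 hr.2) Ioo_subset_Ico_self)]
    exact (hgd r hr).deriv
  have htends32 : Tendsto (fun x : ℝ => 16 * x ^ ((3:ℝ)/2)) (𝓝 0) (𝓝 0) := by
    have hc : ContinuousAt (fun x : ℝ => x ^ ((3:ℝ)/2)) 0 :=
      Real.continuousAt_rpow_const 0 _ (Or.inr (by norm_num))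
    have h : ContinuousAt (fun x : ℝ => 16 * x ^ ((3:ℝ)/2)) 0 := continuousAt_const.mul hc
    unfold ContinuousAt at h
    simpa [Real.zero_rpow (show (3:ℝ)/2 ≠ 0 by norm_num)] using h
  have hcontOn : ContinuousOn (derivWithin g (Ico 0 b)) (Ico 0 b) := by
    intro r hr
    rcases eq_or_lt_of_le hr.1 with heq | hpos
    · rw [← heq]
      have key : Tendsto (derivWithin g (Ico 0 b)) (𝓝[Ico 0 b] 0) (𝓝 0) := by
        apply squeeze_zero_norm' (a := fun x : ℝ => 16 * x ^ ((3:ℝ)/2))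
        · filter_upwards [self_mem_nhdsWithin] with x hx
          rcases eq_or_lt_of_le hx.1 with hx0 | hx0
          · rw [← hx0, hdw0, norm_zero, Real.zero_rpow (by norm_num : (3:ℝ)/2 ≠ 0), mul_zero]
          · rw [Real.norm_eq_abs, hdwr x ⟨hx0, hx.2⟩]
            exact hg'bd x ⟨hx0, hx.2⟩
        · exact htends32.mono_left nhdsWithin_le_nhds
      have : ContinuousWithinAt (derivWithin g (Ico 0 b)) (Ico 0 b) 0 := by
        unfold ContinuousWithinAt
        rwa [hdw0]
      exact this
    · have hrIoo : r ∈ Ioo 0 b := ⟨hpos, hr.2⟩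
      have ht := (hφ' r hrIoo).1
      have hFcont : ContinuousAt (fun x => Qdd c₀ (φ x) * (Qd c₀ (φ x))⁻¹) r := by
        have h1 : ContinuousAt (fun x => Qdd c₀ (φ x)) r :=
          (continuousAt_Qdd c₀ (by linarith [hb (φ r) ht.le])).comp (hφcont r hrIoo)
        have h2 : ContinuousAt (fun x => Qd c₀ (φ x)) r :=
          ((hasDerivAt_Qd c₀ (by linarith [hb (φ r) ht.le])).continuousAt).comp (hφcont r hrIoo)
        exact h1.mul (h2.inv₀ (ne_of_lt (hQdneg _ ht.le)))
      have hev : (fun x => Qdd c₀ (φ x) * (Qd c₀ (φ x))⁻¹) =ᶠ[𝓝 r]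
          derivWithin g (Ico 0 b) := by
        filter_upwards [Ioo_mem_nhds hrIoo.1 hrIoo.2] with x hx
        exact (hdwr x hx).symm
      exact (hFcont.congr hev).continuousWithinAt
  constructor
  · have hstep := (contDiffOn_succ_iff_derivWithin (n := 0) huniq).2
      ⟨hdiffOn, by simp, contDiffOn_zero.2 hcontOn⟩
    simpa using hstep
  · apply squeeze_zero_norm' (a := fun x : ℝ => 16 * x ^ ((3:ℝ)/2))
    · filter_upwards [Ioo_mem_nhdsGT_of_mem (⟨le_rfl, hb0⟩ : (0:ℝ) ∈ Ico 0 b)] with x hx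
      rw [Real.norm_eq_abs, (hgd x hx).deriv]
      exact hg'bd x hx
    · exact htends32.mono_left nhdsWithin_le_nhds
end
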